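/- Let X and Y be the two vertex classes of K_{n,n}, let G_1, …, G_t be pairwise edge-disjoint subgraphs of K_{n,n} such that no G_i contains a cycle of length at most 2k, and let Z = [t] × [k]. Then the 3-partite 3-uniform hypergraph with vertex classes X, Y, Z whose hyperedges are all sets {x, y, (i, s)} with x ∈ X, y ∈ Y, i ∈ [t], s ∈ [k], and {x, y} an edge of G_i, is tight-cycle-free. -/

import Mathlib

/-- The edge ("window") `{v i, v (i+1), …, v (i+r-1)}` of a tight cycle. -/
def tightWindow {V : Type*} [DecidableEq V] (r : ℕ) {ℓ : ℕ} (v : ZMod ℓ → V)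
    (i : ZMod ℓ) : Finset V :=
  Finset.image (fun j : Fin r => v (i + (j : ℕ))) Finset.univ

/-- `E` contains an `r`-uniform tight cycle of length `ℓ`: distinct vertices
`v 0, …, v (ℓ-1)` all of whose `r`-windows (indices mod `ℓ`) are edges of `E`. -/
def IsTightCycleIn {V : Type*} [DecidableEq V] (r ℓ : ℕ) (E : Set (Finset V)) : Prop :=
  ∃ v : ZMod ℓ → V, Function.Injective v ∧ ∀ i : ZMod ℓ, tightWindow r v i ∈ E

/-- `E` contains an `r`-uniform tight cycle of some length `ℓ > r`. -/
def HasTightCycle {V : Type*} [DecidableEq V] (r : ℕ) (E : Set (Finset V)) : Prop :=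
  ∃ ℓ : ℕ, r < ℓ ∧ IsTightCycleIn r ℓ E

/-- `E` is tight-cycle-free. -/
def TightCycleFree {V : Type*} [DecidableEq V] (r : ℕ) (E : Set (Finset V)) : Prop :=
  ¬ HasTightCycle r E

/-- `f_r(n)`: the maximum number of edges of an `r`-uniform tight-cycle-free
hypergraph on `n` vertices. -/
noncomputable def tightCycleTuran (r n : ℕ) : ℕ :=
  sSup {m | ∃ E : Finset (Finset (Fin n)), (∀ e ∈ E, e.card = r) ∧
    TightCycleFree r (E : Set (Finset (Fin n))) ∧ E.card = m}

/-! ### Auxiliary machinery: building cycles in simple graphs -/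

private def mkWalkAux {α : Type*} (H : SimpleGraph α) (f : ℕ → α) :
    (d j : ℕ) → (∀ r, j ≤ r → r < j + d → H.Adj (f r) (f (r+1))) → H.Walk (f j) (f (j + d))
  | 0, _, _ => SimpleGraph.Walk.nil
  | d+1, j, h =>
    SimpleGraph.Walk.cons (h j le_rfl (by omega))
      ((mkWalkAux H f d (j+1) (fun r h1 h2 => h r (by omega) (by omega))).copy rfl
        (congrArg f (by omega)))

private lemma mkWalkAux_length {α : Type*} (H : SimpleGraph α) (f : ℕ → α) :
    ∀ d j h, (mkWalkAux H f d j h).length = d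
  | 0, _, _ => rfl
  | d+1, j, h => by
    simp [mkWalkAux, mkWalkAux_length H f d]

private lemma mkWalkAux_support {α : Type*} (H : SimpleGraph α) (f : ℕ → α) :
    ∀ d j h, (mkWalkAux H f d j h).support = (List.range (d+1)).map (fun r => f (j + r))
  | 0, j, _ => by simp [mkWalkAux, List.range_succ]
  | d+1, j, h => by
    have hf : (fun r => f (j + 1 + r)) = (fun r => f (j + (r+1))) := by
      funext r; rw [show j + 1 + r = j + (r+1) from by omega]
    rw [mkWalkAux, SimpleGraph.Walk.support_cons, SimpleGraph.Walk.support_copy,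
      mkWalkAux_support H f d, hf]
    conv_rhs => rw [List.range_succ_eq_map]
    rw [List.map_cons, List.map_map]
    rfl

private lemma mkWalkAux_edges {α : Type*} (H : SimpleGraph α) (f : ℕ → α) :
    ∀ d j h, (mkWalkAux H f d j h).edges = (List.range d).map (fun r => s(f (j + r), f (j + r + 1)))
  | 0, j, _ => by simp [mkWalkAux]
  | d+1, j, h => by
    have hf : (fun r => s(f (j + 1 + r), f (j + 1 + r + 1)))
        = (fun r => s(f (j + (r+1)), f (j + (r+1) + 1))) := by
      funext r; rw [show j + 1 + r = j + (r+1) from by omega]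
    rw [mkWalkAux, SimpleGraph.Walk.edges_cons, SimpleGraph.Walk.edges_copy,
      mkWalkAux_edges H f d, hf]
    conv_rhs => rw [List.range_succ_eq_map]
    rw [List.map_cons, List.map_map]
    rfl

private lemma cycle_of_seq {α : Type*} (H : SimpleGraph α) (f : ℕ → α) (L : ℕ) (hL : 3 ≤ L)
    (hadj : ∀ r, r < L → H.Adj (f r) (f (r+1)))
    (hinj : ∀ r, r < L → ∀ r', r' < L → f r = f r' → r = r')
    (hclose : f L = f 0) :
    ∃ w : H.Walk (f 0) (f 0), w.IsCycle ∧ w.length = L := by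
  have hadj' : ∀ r, 0 ≤ r → r < 0 + L → H.Adj (f r) (f (r+1)) := fun r _ h2 => hadj r (by omega)
  have hend : f (0 + L) = f 0 := by rw [Nat.zero_add, hclose]
  refine ⟨(mkWalkAux H f L 0 hadj').copy rfl hend, ?_, ?_⟩
  · have hedges : ((mkWalkAux H f L 0 hadj').copy rfl hend).edges
        = (List.range L).map (fun r => s(f r, f (r + 1))) := by
      rw [SimpleGraph.Walk.edges_copy, mkWalkAux_edges]
      apply List.map_congr_left
      intro a _
      rw [Nat.zero_add]
    have hsupp : ((mkWalkAux H f L 0 hadj').copy rfl hend).support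
        = (List.range (L+1)).map (fun r => f r) := by
      rw [SimpleGraph.Walk.support_copy, mkWalkAux_support]
      apply List.map_congr_left
      intro a _
      rw [Nat.zero_add]
    refine ⟨⟨⟨?_⟩, ?_⟩, ?_⟩
    · rw [hedges]
      refine List.Nodup.map_on ?_ List.nodup_range
      intro r hr r' hr' he
      rw [List.mem_range] at hr hr'
      rw [Sym2.eq_iff] at he
      rcases he with ⟨h1, h2⟩ | ⟨h1, h2⟩
      · exact hinj r hr r' hr' h1
      · rcases Nat.lt_or_ge (r'+1) L with h | h
        · have hr1 : r = r' + 1 := hinj r hr (r'+1) h h1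
          rcases Nat.lt_or_ge (r+1) L with h' | h'
          · have : r + 1 = r' := hinj (r+1) h' r' hr' h2
            omega
          · have hrL : r + 1 = L := by omega
            have : f 0 = f r' := by rw [← hclose, ← hrL]; exact h2
            have : 0 = r' := hinj 0 (by omega) r' hr' this
            omega
        · have hrL : r' + 1 = L := by omega
          have : f r = f 0 := by rw [h1, hrL, hclose]
          have hr0 : r = 0 := hinj r hr 0 (by omega) this
          rcases Nat.lt_or_ge (r+1) L with h' | h'
          · have : r + 1 = r' := hinj (r+1) h' r' hr' h2
            omega
          · omega
    · intro hnil
      have := congrArg SimpleGraph.Walk.length hnil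
      rw [SimpleGraph.Walk.length_copy, mkWalkAux_length] at this
      simp at this
      omega
    · rw [hsupp, List.range_succ_eq_map, List.map_cons, List.tail_cons, List.map_map]
      refine List.Nodup.map_on ?_ List.nodup_range
      intro r hr r' hr' he
      rw [List.mem_range] at hr hr'
      simp only [Function.comp_apply, Nat.succ_eq_add_one] at he
      rcases Nat.lt_or_ge (r+1) L with h | h
      · rcases Nat.lt_or_ge (r'+1) L with h' | h'
        · have := hinj (r+1) h (r'+1) h' he
          omega
        · have hrL : r' + 1 = L := by omega
          have : f (r+1) = f 0 := by rw [he, hrL, hclose]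
          have := hinj (r+1) h 0 (by omega) this
          omega
      · rcases Nat.lt_or_ge (r'+1) L with h' | h'
        · have hrL : r + 1 = L := by omega
          have : f 0 = f (r'+1) := by rw [← hclose, ← hrL]; exact he
          have := hinj 0 (by omega) (r'+1) h' this
          omega
        · omega
  · rw [SimpleGraph.Walk.length_copy, mkWalkAux_length]

private lemma final_cycle {α : Type*} (H : SimpleGraph α) (m k : ℕ) (hm2 : 2 ≤ m) (hmk : m ≤ k)
    (A B : ℕ → α)
    (h1 : ∀ j, H.Adj (A j) (B j)) (h2 : ∀ j, H.Adj (B j) (A (j+1)))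
    (hiA : ∀ j, j < m → ∀ j', j' < m → A j = A j' → j = j')
    (hiB : ∀ j, j < m → ∀ j', j' < m → B j = B j' → j = j')
    (hAB : ∀ j, j < m → ∀ j', j' < m → A j ≠ B j')
    (hAm : A m = A 0)
    (hgirth : ∀ x, ∀ w : H.Walk x x, w.IsCycle → ¬ w.length ≤ 2 * k) : False := by
  set f : ℕ → α := fun r => if r % 2 = 0 then A (r/2) else B (r/2) with hfdef
  have hfe : ∀ r, r % 2 = 0 → f r = A (r/2) := by intro r h; rw [hfdef]; simp [h]
  have hfo : ∀ r, r % 2 = 1 → f r = B (r/2) := by intro r h; rw [hfdef]; simp [h]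
  have hadj : ∀ r, r < 2*m → H.Adj (f r) (f (r+1)) := by
    intro r hr
    rcases Nat.mod_two_eq_zero_or_one r with h | h
    · rw [hfe r h, hfo (r+1) (by omega), show (r+1)/2 = r/2 from by omega]
      exact h1 _
    · rw [hfo r h, hfe (r+1) (by omega), show (r+1)/2 = r/2 + 1 from by omega]
      exact h2 _
  have hinj : ∀ r, r < 2*m → ∀ r', r' < 2*m → f r = f r' → r = r' := by
    intro r hr r' hr' h
    rcases Nat.mod_two_eq_zero_or_one r with h0 | h0 <;>
      rcases Nat.mod_two_eq_zero_or_one r' with h1' | h1'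
    · rw [hfe r h0, hfe r' h1'] at h
      have := hiA _ (by omega) _ (by omega) h
      omega
    · rw [hfe r h0, hfo r' h1'] at h
      exact absurd h (hAB _ (by omega) _ (by omega))
    · rw [hfo r h0, hfe r' h1'] at h
      exact absurd h.symm (hAB _ (by omega) _ (by omega))
    · rw [hfo r h0, hfo r' h1'] at h
      have := hiB _ (by omega) _ (by omega) h
      omega
  have hclose : f (2*m) = f 0 := by
    rw [hfe (2*m) (by omega), hfe 0 (by omega), show (2*m)/2 = m from by omega,
      show (0:ℕ)/2 = 0 from rfl]
    exact hAm
  obtain ⟨w, hcyc, hlen⟩ := cycle_of_seq H f (2*m) (by omega) hadj hinj hclose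
  exact hgirth _ w hcyc (by rw [hlen]; omega)

/-! ### Auxiliary lemmas about the construction -/

private lemma tightWindow_three {V : Type*} [DecidableEq V] {ℓ : ℕ} (v : ZMod ℓ → V)
    (i : ZMod ℓ) : tightWindow 3 v i = {v i, v (i+1), v (i+2)} := by
  unfold tightWindow
  rw [show (Finset.univ : Finset (Fin 3)) = {0, 1, 2} from by decide]
  simp [Finset.image_insert]

private lemma triple_cases {V : Type*} [DecidableEq V] {u1 u2 u3 A B C : V}
    (h : ({u1, u2, u3} : Finset V) = {A, B, C})
    (h12 : u1 ≠ u2) (h13 : u1 ≠ u3) (h23 : u2 ≠ u3) :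
    (u1 = A ∧ u2 = B ∧ u3 = C) ∨ (u1 = A ∧ u2 = C ∧ u3 = B) ∨
    (u1 = B ∧ u2 = A ∧ u3 = C) ∨ (u1 = B ∧ u2 = C ∧ u3 = A) ∨
    (u1 = C ∧ u2 = A ∧ u3 = B) ∨ (u1 = C ∧ u2 = B ∧ u3 = A) := by
  have m1 : u1 = A ∨ u1 = B ∨ u1 = C := by
    have : u1 ∈ ({A, B, C} : Finset V) := by rw [← h]; simp
    simpa using this
  have m2 : u2 = A ∨ u2 = B ∨ u2 = C := by
    have : u2 ∈ ({A, B, C} : Finset V) := by rw [← h]; simp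
    simpa using this
  have m3 : u3 = A ∨ u3 = B ∨ u3 = C := by
    have : u3 ∈ ({A, B, C} : Finset V) := by rw [← h]; simp
    simpa using this
  rcases m1 with h1|h1|h1 <;> rcases m2 with h2|h2|h2 <;> rcases m3 with h3|h3|h3 <;>
    first
      | (exfalso; apply h12; rw [h1, h2]; done)
      | (exfalso; apply h13; rw [h1, h3]; done)
      | (exfalso; apply h23; rw [h2, h3]; done)
      | tauto

private def consE (n k t : ℕ) (G : Fin t → SimpleGraph (Fin n ⊕ Fin n)) :
    Set (Finset ((Fin n ⊕ Fin n) ⊕ (Fin t × Fin k))) :=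
  {e | ∃ (x y : Fin n) (i : Fin t) (s : Fin k),
      (G i).Adj (Sum.inl x) (Sum.inr y) ∧
      e = {Sum.inl (Sum.inl x), Sum.inl (Sum.inr y), Sum.inr (i, s)}}

private lemma winfo {n k t : ℕ} {G : Fin t → SimpleGraph (Fin n ⊕ Fin n)} {ℓ : ℕ}
    {v : ZMod ℓ → (Fin n ⊕ Fin n) ⊕ (Fin t × Fin k)} {i : ZMod ℓ}
    (hwi : tightWindow 3 v i ∈ consE n k t G) :
    ∃ (g : Fin t) (s : Fin k) (x y : Fin n), (G g).Adj (Sum.inl x) (Sum.inr y) ∧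
      ({v i, v (i+1), v (i+2)} : Finset _)
        = {Sum.inl (Sum.inl x), Sum.inl (Sum.inr y), Sum.inr (g, s)} := by
  rw [tightWindow_three] at hwi
  obtain ⟨x, y, g, s, hadj, heq⟩ := hwi
  exact ⟨g, s, x, y, hadj, heq⟩

private lemma pat_lemma {n k t ℓ : ℕ} {G : Fin t → SimpleGraph (Fin n ⊕ Fin n)}
    (hℓ : 3 < ℓ) {v : ZMod ℓ → (Fin n ⊕ Fin n) ⊕ (Fin t × Fin k)}
    (hv : Function.Injective v)
    (hw : ∀ i, tightWindow 3 v i ∈ consE n k t G) (i : ZMod ℓ) :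
    (¬(∃ z, v i = Sum.inr z) ∧ ¬(∃ z, v (i+1) = Sum.inr z) ∧ (∃ z, v (i+2) = Sum.inr z)) ∨
    (¬(∃ z, v i = Sum.inr z) ∧ (∃ z, v (i+1) = Sum.inr z) ∧ ¬(∃ z, v (i+2) = Sum.inr z)) ∨
    ((∃ z, v i = Sum.inr z) ∧ ¬(∃ z, v (i+1) = Sum.inr z) ∧ ¬(∃ z, v (i+2) = Sum.inr z)) := by
  have hcast : ∀ a b : ℕ, a < ℓ → b < ℓ → ((a : ZMod ℓ) = b) → a = b := by
    intro a b ha hb h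
    have := congrArg ZMod.val h
    rwa [ZMod.val_natCast, ZMod.val_natCast, Nat.mod_eq_of_lt ha, Nat.mod_eq_of_lt hb] at this
  have h10 : (1 : ZMod ℓ) ≠ 0 := by
    intro h
    have h' : ((1:ℕ) : ZMod ℓ) = ((0:ℕ) : ZMod ℓ) := by push_cast; exact h
    have := hcast 1 0 (by omega) (by omega) h'
    omega
  have h20 : (2 : ZMod ℓ) ≠ 0 := by
    intro h
    have h' : ((2:ℕ) : ZMod ℓ) = ((0:ℕ) : ZMod ℓ) := by push_cast; exact h
    have := hcast 2 0 (by omega) (by omega) h'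
    omega
  have h12' : (1 : ZMod ℓ) ≠ 2 := by
    intro h
    have h' : ((1:ℕ) : ZMod ℓ) = ((2:ℕ) : ZMod ℓ) := by push_cast; exact h
    have := hcast 1 2 (by omega) (by omega) h'
    omega
  have d12 : v i ≠ v (i+1) := fun h => h10 (left_eq_add.mp (hv h))
  have d13 : v i ≠ v (i+2) := fun h => h20 (left_eq_add.mp (hv h))
  have d23 : v (i+1) ≠ v (i+2) := fun h => h12' (add_left_cancel (hv h))
  obtain ⟨g, s, x, y, hadj, heq⟩ := winfo (hw i)
  rcases triple_cases heq d12 d13 d23 with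
    ⟨e1,e2,e3⟩|⟨e1,e2,e3⟩|⟨e1,e2,e3⟩|⟨e1,e2,e3⟩|⟨e1,e2,e3⟩|⟨e1,e2,e3⟩ <;>
    simp [e1, e2, e3]

private lemma per_lemma {n k t ℓ : ℕ} {G : Fin t → SimpleGraph (Fin n ⊕ Fin n)}
    (hℓ : 3 < ℓ) {v : ZMod ℓ → (Fin n ⊕ Fin n) ⊕ (Fin t × Fin k)}
    (hv : Function.Injective v)
    (hw : ∀ i, tightWindow 3 v i ∈ consE n k t G) :
    ∀ (c : ZMod ℓ) (b : ℕ),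
      ((∃ z, v (c + ((3*b : ℕ) : ZMod ℓ)) = Sum.inr z) ↔ (∃ z, v c = Sum.inr z)) := by
  have per3 : ∀ c : ZMod ℓ, ((∃ z, v (c + 3) = Sum.inr z) ↔ (∃ z, v c = Sum.inr z)) := by
    intro c
    have a := pat_lemma hℓ hv hw c
    have b := pat_lemma hℓ hv hw (c+1)
    rw [show c+1+1 = c+2 from by ring, show c+1+2 = c+3 from by ring] at b
    tauto
  intro c b
  induction b with
  | zero => simp
  | succ b ih =>
    have e : ((3*(b+1) : ℕ) : ZMod ℓ) = ((3*b : ℕ) : ZMod ℓ) + 3 := by push_cast; ring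
    rw [e, ← add_assoc]
    exact (per3 _).trans ih
private lemma main_aux {n k t : ℕ} (G : Fin t → SimpleGraph (Fin n ⊕ Fin n))
    (hdisj : ∀ i j, i ≠ j → Disjoint ((G i).edgeSet) ((G j).edgeSet))
    (hgirth : ∀ i, ∀ x, ∀ w : (G i).Walk x x, w.IsCycle → ¬ w.length ≤ 2 * k)
    {ℓ m : ℕ} (hm : ℓ = 3 * m) (hm2 : 2 ≤ m)
    {v : ZMod ℓ → (Fin n ⊕ Fin n) ⊕ (Fin t × Fin k)}
    (hv : Function.Injective v)
    (hw : ∀ i, tightWindow 3 v i ∈ consE n k t G)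
    (hP2 : ∃ z, v 2 = Sum.inr z) : False := by
  have hℓ : 3 < ℓ := by omega
  haveI : NeZero ℓ := ⟨by omega⟩
  have hpat := pat_lemma hℓ hv hw
  have hper := per_lemma hℓ hv hw
  have hcast : ∀ a b : ℕ, a < ℓ → b < ℓ → ((a : ZMod ℓ) = b) → a = b := by
    intro a b ha hb h
    have := congrArg ZMod.val h
    rwa [ZMod.val_natCast, ZMod.val_natCast, Nat.mod_eq_of_lt ha, Nat.mod_eq_of_lt hb] at this
  have h10 : (1 : ZMod ℓ) ≠ 0 := by
    intro h
    have h' : ((1:ℕ) : ZMod ℓ) = ((0:ℕ) : ZMod ℓ) := by push_cast; exact h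
    have := hcast 1 0 (by omega) (by omega) h'
    omega
  have h20 : (2 : ZMod ℓ) ≠ 0 := by
    intro h
    have h' : ((2:ℕ) : ZMod ℓ) = ((0:ℕ) : ZMod ℓ) := by push_cast; exact h
    have := hcast 2 0 (by omega) (by omega) h'
    omega
  have h12' : (1 : ZMod ℓ) ≠ 2 := by
    intro h
    have h' : ((1:ℕ) : ZMod ℓ) = ((2:ℕ) : ZMod ℓ) := by push_cast; exact h
    have := hcast 1 2 (by omega) (by omega) h'
    omega
  have dAt : ∀ i : ZMod ℓ, v i ≠ v (i+1) ∧ v i ≠ v (i+2) ∧ v (i+1) ≠ v (i+2) :=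
    fun i => ⟨fun h => h10 (left_eq_add.mp (hv h)),
      fun h => h20 (left_eq_add.mp (hv h)),
      fun h => h12' (add_left_cancel (hv h))⟩
  have hZ2 : ∀ j : ℕ, ∃ z, v (((3*j+2 : ℕ) : ZMod ℓ)) = Sum.inr z := by
    intro j
    have h := hper 2 j
    rw [show (2 : ZMod ℓ) + ((3*j:ℕ):ZMod ℓ) = ((3*j+2:ℕ) : ZMod ℓ) from by push_cast; ring] at h
    exact h.mpr hP2
  have hZ01 : ∀ j : ℕ, ¬(∃ z, v (((3*j:ℕ) : ZMod ℓ)) = Sum.inr z)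
      ∧ ¬(∃ z, v (((3*j+1:ℕ) : ZMod ℓ)) = Sum.inr z) := by
    intro j
    have h2 := hZ2 j
    have hp := hpat (((3*j : ℕ) : ZMod ℓ))
    rw [show ((3*j:ℕ) : ZMod ℓ) + 1 = ((3*j+1:ℕ):ZMod ℓ) from by push_cast; ring,
       show ((3*j:ℕ) : ZMod ℓ) + 2 = ((3*j+2:ℕ):ZMod ℓ) from by push_cast; ring] at hp
    tauto
  choose ζ hζ using hZ2
  -- the three families of adjacencies
  have hE1 : ∀ j : ℕ, ∃ a b, v (((3*j:ℕ) : ZMod ℓ)) = Sum.inl a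
      ∧ v (((3*j+1:ℕ) : ZMod ℓ)) = Sum.inl b ∧ (G (ζ j).1).Adj a b := by
    intro j
    obtain ⟨g, s, x, y, hadj, heq⟩ := winfo (hw (((3*j:ℕ) : ZMod ℓ)))
    have e1 : ((3*j:ℕ) : ZMod ℓ) + 1 = ((3*j+1:ℕ):ZMod ℓ) := by push_cast; ring
    have e2 : ((3*j:ℕ) : ZMod ℓ) + 2 = ((3*j+2:ℕ):ZMod ℓ) := by push_cast; ring
    rw [e1, e2] at heq
    obtain ⟨d1, d2, d3⟩ := dAt (((3*j:ℕ) : ZMod ℓ))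
    rw [e1] at d1; rw [e2] at d2; rw [e1, e2] at d3
    rcases triple_cases heq d1 d2 d3 with
      ⟨f1,f2,f3⟩|⟨f1,f2,f3⟩|⟨f1,f2,f3⟩|⟨f1,f2,f3⟩|⟨f1,f2,f3⟩|⟨f1,f2,f3⟩
    · have hgs : (g, s) = ζ j := Sum.inr.inj (by rw [← f3, hζ j])
      exact ⟨Sum.inl x, Sum.inr y, f1, f2, by rw [← hgs]; exact hadj⟩
    · exact absurd ⟨_, f2⟩ (hZ01 j).2
    · have hgs : (g, s) = ζ j := Sum.inr.inj (by rw [← f3, hζ j])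
      exact ⟨Sum.inr y, Sum.inl x, f1, f2, by rw [← hgs]; exact hadj.symm⟩
    · exact absurd ⟨_, f2⟩ (hZ01 j).2
    · exact absurd ⟨_, f1⟩ (hZ01 j).1
    · exact absurd ⟨_, f1⟩ (hZ01 j).1
  have hE2 : ∀ j : ℕ, ∃ a b, v (((3*j+1:ℕ) : ZMod ℓ)) = Sum.inl a
      ∧ v (((3*(j+1):ℕ) : ZMod ℓ)) = Sum.inl b ∧ (G (ζ j).1).Adj a b := by
    intro j
    obtain ⟨g, s, x, y, hadj, heq⟩ := winfo (hw (((3*j+1:ℕ) : ZMod ℓ)))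
    have e1 : ((3*j+1:ℕ) : ZMod ℓ) + 1 = ((3*j+2:ℕ):ZMod ℓ) := by push_cast; ring
    have e2 : ((3*j+1:ℕ) : ZMod ℓ) + 2 = ((3*(j+1):ℕ):ZMod ℓ) := by push_cast; ring
    rw [e1, e2] at heq
    obtain ⟨d1, d2, d3⟩ := dAt (((3*j+1:ℕ) : ZMod ℓ))
    rw [e1] at d1; rw [e2] at d2; rw [e1, e2] at d3
    rcases triple_cases heq d1 d2 d3 with
      ⟨f1,f2,f3⟩|⟨f1,f2,f3⟩|⟨f1,f2,f3⟩|⟨f1,f2,f3⟩|⟨f1,f2,f3⟩|⟨f1,f2,f3⟩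
    · exact absurd ⟨_, f3⟩ (hZ01 (j+1)).1
    · have hgs : (g, s) = ζ j := Sum.inr.inj (by rw [← f2, hζ j])
      exact ⟨Sum.inl x, Sum.inr y, f1, f3, by rw [← hgs]; exact hadj⟩
    · exact absurd ⟨_, f3⟩ (hZ01 (j+1)).1
    · have hgs : (g, s) = ζ j := Sum.inr.inj (by rw [← f2, hζ j])
      exact ⟨Sum.inr y, Sum.inl x, f1, f3, by rw [← hgs]; exact hadj.symm⟩
    · exact absurd ⟨_, f1⟩ (hZ01 j).2
    · exact absurd ⟨_, f1⟩ (hZ01 j).2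
  have hE3 : ∀ j : ℕ, ∃ a b, v (((3*(j+1):ℕ) : ZMod ℓ)) = Sum.inl a
      ∧ v (((3*(j+1)+1:ℕ) : ZMod ℓ)) = Sum.inl b ∧ (G (ζ j).1).Adj a b := by
    intro j
    obtain ⟨g, s, x, y, hadj, heq⟩ := winfo (hw (((3*j+2:ℕ) : ZMod ℓ)))
    have e1 : ((3*j+2:ℕ) : ZMod ℓ) + 1 = ((3*(j+1):ℕ):ZMod ℓ) := by push_cast; ring
    have e2 : ((3*j+2:ℕ) : ZMod ℓ) + 2 = ((3*(j+1)+1:ℕ):ZMod ℓ) := by push_cast; ring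
    rw [e1, e2] at heq
    obtain ⟨d1, d2, d3⟩ := dAt (((3*j+2:ℕ) : ZMod ℓ))
    rw [e1] at d1; rw [e2] at d2; rw [e1, e2] at d3
    rcases triple_cases heq d1 d2 d3 with
      ⟨f1,f2,f3⟩|⟨f1,f2,f3⟩|⟨f1,f2,f3⟩|⟨f1,f2,f3⟩|⟨f1,f2,f3⟩|⟨f1,f2,f3⟩
    · exact absurd ⟨_, f3⟩ (hZ01 (j+1)).2
    · exact absurd ⟨_, f2⟩ (hZ01 (j+1)).1
    · exact absurd ⟨_, f3⟩ (hZ01 (j+1)).2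
    · exact absurd ⟨_, f2⟩ (hZ01 (j+1)).1
    · have hgs : (g, s) = ζ j := Sum.inr.inj (by rw [← f1, hζ j])
      exact ⟨Sum.inl x, Sum.inr y, f2, f3, by rw [← hgs]; exact hadj⟩
    · have hgs : (g, s) = ζ j := Sum.inr.inj (by rw [← f1, hζ j])
      exact ⟨Sum.inr y, Sum.inl x, f2, f3, by rw [← hgs]; exact hadj.symm⟩
  choose A1 B1 hA1 hB1 hAB1 using hE1
  choose A2 B2 hA2 hB2 hAB2 using hE2
  choose A3 B3 hA3 hB3 hAB3 using hE3
  -- the graph index is constant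
  have hgc : ∀ j : ℕ, (ζ (j+1)).1 = (ζ j).1 := by
    intro j
    by_contra hne
    have hdj := hdisj _ _ hne
    have ea : A1 (j+1) = A3 j := Sum.inl.inj (by rw [← hA1 (j+1), ← hA3 j])
    have eb : B1 (j+1) = B3 j := Sum.inl.inj (by rw [← hB1 (j+1), ← hB3 j])
    have m1 : s(A3 j, B3 j) ∈ (G (ζ j).1).edgeSet := (G (ζ j).1).mem_edgeSet.mpr (hAB3 j)
    have m2 : s(A3 j, B3 j) ∈ (G (ζ (j+1)).1).edgeSet := by
      rw [← ea, ← eb]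
      exact (G (ζ (j+1)).1).mem_edgeSet.mpr (hAB1 (j+1))
    exact Set.disjoint_left.mp hdj m2 m1
  have hgc0 : ∀ j : ℕ, (ζ j).1 = (ζ 0).1 := by
    intro j
    induction j with
    | zero => rfl
    | succ j ih => rw [hgc j, ih]
  -- m ≤ k
  have hmk : m ≤ k := by
    have hsinj : Function.Injective (fun j : Fin m => (ζ (j:ℕ)).2) := by
      intro j j' h
      simp only at h
      have hz : ζ (j:ℕ) = ζ (j':ℕ) := Prod.ext (by rw [hgc0 (j:ℕ), hgc0 (j':ℕ)]) h
      have hvv : v (((3*(j:ℕ)+2 : ℕ) : ZMod ℓ)) = v (((3*(j':ℕ)+2:ℕ) : ZMod ℓ)) := by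
        rw [hζ, hζ, hz]
      have hj := j.isLt
      have hj' := j'.isLt
      have := hcast _ _ (by omega) (by omega) (hv hvv)
      exact Fin.ext (by omega)
    simpa using Fintype.card_le_of_injective _ hsinj
  -- link the chosen vertices
  have hlink1 : ∀ j, A2 j = B1 j := fun j => Sum.inl.inj (by rw [← hA2 j, ← hB1 j])
  have hlink2 : ∀ j, B2 j = A1 (j+1) := fun j => Sum.inl.inj (by rw [← hB2 j, ← hA1 (j+1)])
  have hadjAB : ∀ j, (G ((ζ 0).1)).Adj (A1 j) (B1 j) := fun j => by
    rw [← hgc0 j]; exact hAB1 j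
  have hadjBA : ∀ j, (G ((ζ 0).1)).Adj (B1 j) (A1 (j+1)) := fun j => by
    have h := hAB2 j
    rw [hlink1 j, hlink2 j] at h
    rw [← hgc0 j]
    exact h
  -- injectivity facts
  have hiA : ∀ j, j < m → ∀ j', j' < m → A1 j = A1 j' → j = j' := by
    intro j hj j' hj' h
    have hvv : v (((3*j:ℕ) : ZMod ℓ)) = v (((3*j':ℕ) : ZMod ℓ)) := by rw [hA1, hA1, h]
    have := hcast _ _ (by omega) (by omega) (hv hvv)
    omega
  have hiB : ∀ j, j < m → ∀ j', j' < m → B1 j = B1 j' → j = j' := by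
    intro j hj j' hj' h
    have hvv : v (((3*j+1:ℕ) : ZMod ℓ)) = v (((3*j'+1:ℕ) : ZMod ℓ)) := by rw [hB1, hB1, h]
    have := hcast _ _ (by omega) (by omega) (hv hvv)
    omega
  have hABne : ∀ j, j < m → ∀ j', j' < m → A1 j ≠ B1 j' := by
    intro j hj j' hj' h
    have hvv : v (((3*j:ℕ) : ZMod ℓ)) = v (((3*j'+1:ℕ) : ZMod ℓ)) := by rw [hA1, hB1, h]
    have := hcast _ _ (by omega) (by omega) (hv hvv)
    omega
  have hAm : A1 m = A1 0 := by
    have hvv : v (((3*m:ℕ) : ZMod ℓ)) = v (((3*0:ℕ) : ZMod ℓ)) := by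
      congr 1
      rw [← hm]
      simp [ZMod.natCast_self]
    exact Sum.inl.inj (by rw [← hA1 m, ← hA1 0, hvv])
  exact final_cycle (G ((ζ 0).1)) m k hm2 hmk A1 B1 hadjAB hadjBA hiA hiB hABne hAm
    (hgirth ((ζ 0).1))
/-- The explicit construction in Lemma 2: attach `k` new vertices `(i, s)` to each
graph `Gᵢ`, replacing each edge `{x, y}` of `Gᵢ` by the hyperedges `{x, y, (i, s)}`.
The resulting 3-partite 3-uniform hypergraph is tight-cycle-free. -/
theorem construction_tightCycleFree (n k t : ℕ)
    (G : Fin t → SimpleGraph (Fin n ⊕ Fin n))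
    (hsub : ∀ i, G i ≤ completeBipartiteGraph (Fin n) (Fin n))
    (hdisj : ∀ i j, i ≠ j → Disjoint ((G i).edgeSet) ((G j).edgeSet))
    (hgirth : ∀ i, ∀ x, ∀ w : (G i).Walk x x, w.IsCycle → ¬ w.length ≤ 2 * k) :
    TightCycleFree 3
      ({e | ∃ (x y : Fin n) (i : Fin t) (s : Fin k),
          (G i).Adj (Sum.inl x) (Sum.inr y) ∧
          e = {Sum.inl (Sum.inl x), Sum.inl (Sum.inr y), Sum.inr (i, s)}} :
        Set (Finset ((Fin n ⊕ Fin n) ⊕ (Fin t × Fin k)))) := by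
  rintro ⟨ℓ, hℓ, v, hv, hw⟩
  have hw' : ∀ i, tightWindow 3 v i ∈ consE n k t G := hw
  haveI : NeZero ℓ := ⟨by omega⟩
  have hpat := pat_lemma hℓ hv hw'
  have hper := per_lemma hℓ hv hw'
  have hcast : ∀ a b : ℕ, a < ℓ → b < ℓ → ((a : ZMod ℓ) = b) → a = b := by
    intro a b ha hb h
    have := congrArg ZMod.val h
    rwa [ZMod.val_natCast, ZMod.val_natCast, Nat.mod_eq_of_lt ha, Nat.mod_eq_of_lt hb] at this
  have hdvd : 3 ∣ ℓ := by
    by_contra hnd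
    have hcop : Nat.Coprime 3 ℓ := (Nat.Prime.coprime_iff_not_dvd Nat.prime_three).mpr hnd
    have hmul : ((3:ℕ) : ZMod ℓ) * ((3:ℕ) : ZMod ℓ)⁻¹ = 1 := ZMod.coe_mul_inv_eq_one 3 hcop
    have hb : ((3 * (((3:ℕ):ZMod ℓ)⁻¹).val : ℕ) : ZMod ℓ) = 1 := by
      push_cast
      rw [ZMod.natCast_zmod_val]
      exact_mod_cast hmul
    have hstep : ∀ c : ZMod ℓ, (∃ z, v (c+1) = Sum.inr z) ↔ (∃ z, v c = Sum.inr z) := by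
      intro c
      have h := hper c (((3:ℕ):ZMod ℓ)⁻¹).val
      rwa [hb] at h
    have p0 := hpat 0
    have s0 := hstep 0
    have s1 := hstep 1
    rw [zero_add] at s0
    rw [show (1:ZMod ℓ)+1 = 2 from by ring] at s1
    rw [zero_add, zero_add] at p0
    tauto
  obtain ⟨m, hm⟩ := hdvd
  have hm2 : 2 ≤ m := by omega
  have ho : ∃ o : ZMod ℓ, ∃ z, v o = Sum.inr z := by
    rcases hpat 0 with ⟨_,_,h⟩|⟨_,h,_⟩|⟨h,_,_⟩ <;> exact ⟨_, h⟩
  obtain ⟨o, hoz⟩ := ho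
  have hv2 : Function.Injective (fun p : ZMod ℓ => v (p + (o - 2))) := fun p q h =>
    add_right_cancel (hv h)
  have hw2 : ∀ i : ZMod ℓ, tightWindow 3 (fun p => v (p + (o - 2))) i ∈ consE n k t G := by
    intro i
    have he : tightWindow 3 (fun p => v (p + (o - 2))) i = tightWindow 3 v (i + (o - 2)) := by
      unfold tightWindow
      apply Finset.image_congr
      intro j _
      show v (i + (j:ℕ) + (o - 2)) = v (i + (o - 2) + (j:ℕ))
      congr 1
      ring
    rw [he]
    exact hw' _
  have hP2 : ∃ z, (fun p : ZMod ℓ => v (p + (o - 2))) 2 = Sum.inr z := by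
    show ∃ z, v (2 + (o - 2)) = Sum.inr z
    rw [show (2:ZMod ℓ) + (o - 2) = o from by ring]
    exact hoz
  exact main_aux G hdisj hgirth hm hm2 hv2 hw2 hP2
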